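/- For natural numbers m, n and real x ≥ 0: L_{m+n}(x) = (n!/(m+n)!) e^x (d/dx)^m [e^{-x} x^m L_n^m(x)], where L_n^m is the generalized Laguerre polynomial. -/

import Mathlib

open Real

/-- Laguerre polynomial. -/
noncomputable def laguerre (k : ℕ) (x : ℝ) : ℝ :=
  ∑ j ∈ Finset.range (k + 1), (-1 : ℝ) ^ j * (k.choose j) * x ^ j / j.factorial

/-- Generalized (associated) Laguerre polynomial. -/
noncomputable def laguerreA (n m : ℕ) (x : ℝ) : ℝ :=
  ∑ j ∈ Finset.range (n + 1), (-1 : ℝ) ^ j * ((n + m).choose (n - j)) * x ^ j / j.factorial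

private lemma natkey (m n j : ℕ) (hj : j ≤ n) :
    (j + m + 1) * ((n + m + 1).choose (n - j)) =
      (n + 1 - j) * ((n + m + 1).choose (n + 1 - j)) := by
  have h3 := Nat.choose_succ_right_eq (n + m + 1) (n - j)
  have h2 : n + m + 1 - (n - j) = j + m + 1 := by omega
  have h1 : n + 1 - j = (n - j) + 1 := by omega
  rw [h2] at h3
  rw [h1, mul_comm, mul_comm ((n - j) + 1)]
  exact h3.symm

noncomputable def rr (n m : ℕ) (y : ℝ) (j : ℕ) : ℝ :=
  ((n : ℝ) + 1) * ((-1 : ℝ) ^ j * ((n + m + 1).choose (n + 1 - j)) / j.factorial) *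
    (Real.exp (-y) * y ^ (j + m))

noncomputable def ww (n m : ℕ) (y : ℝ) (j : ℕ) : ℝ :=
  -((-1 : ℝ) ^ j * (j : ℝ) * ((n + m + 1).choose (n + 1 - j)) / j.factorial) *
    (Real.exp (-y) * y ^ (j + m))

private lemma sum_identity (n m : ℕ) (y : ℝ) :
    (∑ j ∈ Finset.range (n + 1),
      ((-1 : ℝ) ^ j * ((n + m + 1).choose (n - j)) / j.factorial) *
        (Real.exp (-y) * (-1) * y ^ (j + (m + 1)) +
          Real.exp (-y) * (((j + (m + 1) : ℕ) : ℝ) * y ^ (j + m))))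
    = ((n : ℝ) + 1) * (Real.exp (-y) * y ^ m * laguerreA (n + 1) m y) := by
  have hstep1 : ∀ j ∈ Finset.range (n + 1),
      ((-1 : ℝ) ^ j * ((n + m + 1).choose (n - j)) / j.factorial) *
        (Real.exp (-y) * (-1) * y ^ (j + (m + 1)) +
          Real.exp (-y) * (((j + (m + 1) : ℕ) : ℝ) * y ^ (j + m)))
      = (rr n m y j + ww n m y j) - ww n m y (j + 1) := by
    intro j hj
    have hj' : j ≤ n := by simpa [Nat.lt_succ_iff] using hj
    have hsub : n + 1 - (j + 1) = n - j := by omega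
    have hcast : ((n : ℝ) + 1 - (j : ℝ)) * (((n + m + 1).choose (n + 1 - j) : ℕ) : ℝ)
        = ((j : ℝ) + m + 1) * (((n + m + 1).choose (n - j) : ℕ) : ℝ) := by
      have h := natkey m n j hj'
      have hc : (((j + m + 1) * ((n + m + 1).choose (n - j)) : ℕ) : ℝ)
          = (((n + 1 - j) * ((n + m + 1).choose (n + 1 - j)) : ℕ) : ℝ) := by
        exact_mod_cast congrArg (Nat.cast : ℕ → ℝ) h
      push_cast [Nat.cast_sub (by omega : j ≤ n + 1)] at hc
      linarith [hc]
    have hww : ww n m y (j + 1)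
        = (((-1 : ℝ) ^ j * ((n + m + 1).choose (n - j)) / j.factorial)) *
            (Real.exp (-y) * y ^ (j + 1 + m)) := by
      unfold ww
      rw [hsub, Nat.factorial_succ]
      have hfj : (j.factorial : ℝ) ≠ 0 := Nat.cast_ne_zero.mpr j.factorial_ne_zero
      have hfj1 : ((j : ℝ) + 1) ≠ 0 := by positivity
      push_cast
      rw [pow_succ (-1 : ℝ) j]
      field_simp
    rw [hww]
    rw [show j + (m + 1) = j + 1 + m from by omega]
    unfold rr ww
    rw [show j + 1 + m = (j + m) + 1 from by omega, pow_succ y (j + m)]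
    push_cast
    linear_combination (-(Real.exp (-y) * y ^ (j + m) * (-1 : ℝ) ^ j / (j.factorial : ℝ))) * hcast
  calc (∑ j ∈ Finset.range (n + 1),
      ((-1 : ℝ) ^ j * ((n + m + 1).choose (n - j)) / j.factorial) *
        (Real.exp (-y) * (-1) * y ^ (j + (m + 1)) +
          Real.exp (-y) * (((j + (m + 1) : ℕ) : ℝ) * y ^ (j + m))))
      = ∑ j ∈ Finset.range (n + 1), ((rr n m y j + ww n m y j) - ww n m y (j + 1)) :=
        Finset.sum_congr rfl hstep1
    _ = (∑ j ∈ Finset.range (n + 1), (rr n m y j + ww n m y j))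
          - ∑ j ∈ Finset.range (n + 1), ww n m y (j + 1) := Finset.sum_sub_distrib _ _
    _ = (∑ j ∈ Finset.range (n + 1), (rr n m y j + ww n m y j))
          - ∑ j ∈ Finset.range (n + 2), ww n m y j := by
        rw [Finset.sum_range_succ' (ww n m y) (n + 1)]
        have hw0 : ww n m y 0 = 0 := by unfold ww; simp
        rw [hw0, add_zero]
    _ = (∑ j ∈ Finset.range (n + 1), (rr n m y j + ww n m y j))
          - ((∑ j ∈ Finset.range (n + 1), ww n m y j) + ww n m y (n + 1)) := by
        rw [Finset.sum_range_succ (ww n m y) (n + 1)]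
    _ = (∑ j ∈ Finset.range (n + 1), rr n m y j) - ww n m y (n + 1) := by
        rw [Finset.sum_add_distrib]; ring
    _ = (∑ j ∈ Finset.range (n + 1), rr n m y j) + rr n m y (n + 1) := by
        have : ww n m y (n + 1) = - rr n m y (n + 1) := by
          unfold rr ww; push_cast; ring
        rw [this]; ring
    _ = ∑ j ∈ Finset.range (n + 2), rr n m y j := (Finset.sum_range_succ _ _).symm
    _ = ((n : ℝ) + 1) * (Real.exp (-y) * y ^ m * laguerreA (n + 1) m y) := by
        unfold rr laguerreA
        rw [show n + 1 + m = n + m + 1 from by omega, Finset.mul_sum, Finset.mul_sum]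
        refine Finset.sum_congr rfl fun j _ => ?_
        rw [pow_add]
        ring

private lemma step (n m : ℕ) (y : ℝ) :
    HasDerivAt (fun y : ℝ => Real.exp (-y) * y ^ (m + 1) * laguerreA n (m + 1) y)
      (((n : ℝ) + 1) * (Real.exp (-y) * y ^ m * laguerreA (n + 1) m y)) y := by
  have hfun : (fun y : ℝ => Real.exp (-y) * y ^ (m + 1) * laguerreA n (m + 1) y) =
      fun y : ℝ => ∑ j ∈ Finset.range (n + 1),
        ((-1 : ℝ) ^ j * ((n + m + 1).choose (n - j)) / j.factorial) *
          (Real.exp (-y) * y ^ (j + (m + 1))) := by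
    funext z
    unfold laguerreA
    rw [show n + (m + 1) = n + m + 1 from by omega, Finset.mul_sum]
    refine Finset.sum_congr rfl fun j _ => ?_
    rw [pow_add]
    ring
  rw [hfun]
  have hterm : ∀ j ∈ Finset.range (n + 1),
      HasDerivAt (fun y : ℝ =>
        ((-1 : ℝ) ^ j * ((n + m + 1).choose (n - j)) / j.factorial) *
          (Real.exp (-y) * y ^ (j + (m + 1))))
        (((-1 : ℝ) ^ j * ((n + m + 1).choose (n - j)) / j.factorial) *
          (Real.exp (-y) * (-1) * y ^ (j + (m + 1)) +
            Real.exp (-y) * (((j + (m + 1) : ℕ) : ℝ) * y ^ (j + m)))) y := by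
    intro j _
    have h1 : HasDerivAt (fun y : ℝ => Real.exp (-y)) (Real.exp (-y) * (-1)) y :=
      (hasDerivAt_id y).neg.exp
    have h2 : HasDerivAt (fun y : ℝ => y ^ (j + (m + 1)))
        (((j + (m + 1) : ℕ) : ℝ) * y ^ (j + m)) y := by
      have := hasDerivAt_pow (j + (m + 1)) y
      rwa [show j + (m + 1) - 1 = j + m from by omega] at this
    exact ((h1.mul h2)).const_mul _
  have hsum := HasDerivAt.fun_sum hterm
  have := sum_identity n m y
  rw [this] at hsum
  exact hsum

private lemma iterate_deriv_const_mul (c : ℝ) (f : ℝ → ℝ) (m : ℕ) :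
    deriv^[m] (fun y => c * f y) = fun y => c * deriv^[m] f y := by
  induction m generalizing f with
  | zero => rfl
  | succ k ih =>
    rw [Function.iterate_succ_apply, Function.iterate_succ_apply]
    rw [show deriv (fun y => c * f y) = fun y => c * deriv f y from
      funext fun x => deriv_const_mul_field c]
    exact ih (deriv f)

private lemma laguerreA_zero (k : ℕ) (x : ℝ) : laguerreA k 0 x = laguerre k x := by
  unfold laguerre laguerreA
  refine Finset.sum_congr rfl fun j hj => ?_
  have hj' : j ≤ k := by simpa [Nat.lt_succ_iff] using hj
  rw [Nat.add_zero, Nat.choose_symm hj']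

private lemma key (m : ℕ) : ∀ (n : ℕ) (x : ℝ),
    deriv^[m] (fun y : ℝ => Real.exp (-y) * y ^ m * laguerreA n m y) x =
      (((m + n).factorial : ℝ) / (n.factorial : ℝ)) * (Real.exp (-x) * laguerreA (m + n) 0 x) := by
  induction m with
  | zero =>
    intro n x
    simp only [Function.iterate_zero, id_eq, pow_zero, Nat.zero_add, zero_add]
    have : ((n.factorial : ℝ) / (n.factorial : ℝ)) = 1 := by
      have : (n.factorial : ℝ) ≠ 0 := Nat.cast_ne_zero.mpr n.factorial_ne_zero
      field_simp
    rw [this]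
    ring
  | succ k ih =>
    intro n x
    rw [Function.iterate_succ_apply]
    have hderiv : deriv (fun y : ℝ => Real.exp (-y) * y ^ (k + 1) * laguerreA n (k + 1) y)
        = fun y => ((n : ℝ) + 1) * (Real.exp (-y) * y ^ k * laguerreA (n + 1) k y) :=
      funext fun y => (step n k y).deriv
    rw [hderiv, iterate_deriv_const_mul]
    beta_reduce
    rw [ih (n + 1) x]
    rw [show k + (n + 1) = k + 1 + n from by omega]
    have hn : (n.factorial : ℝ) ≠ 0 := Nat.cast_ne_zero.mpr n.factorial_ne_zero
    have hn1 : ((n + 1).factorial : ℝ) ≠ 0 := Nat.cast_ne_zero.mpr (n + 1).factorial_ne_zero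
    rw [Nat.factorial_succ]
    push_cast
    field_simp

theorem laguerre_add_eq_deriv (m n : ℕ) (x : ℝ) (hx : 0 ≤ x) :
    laguerre (m + n) x =
      ((n.factorial : ℝ) / (m + n).factorial) * Real.exp x *
        (deriv^[m] (fun y : ℝ => Real.exp (-y) * y ^ m * laguerreA n m y)) x := by
  rw [key m n x, laguerreA_zero]
  rw [Real.exp_neg]
  have h1 : Real.exp x ≠ 0 := Real.exp_ne_zero x
  have h2 : ((m + n).factorial : ℝ) ≠ 0 := Nat.cast_ne_zero.mpr (m + n).factorial_ne_zero
  have h3 : (n.factorial : ℝ) ≠ 0 := Nat.cast_ne_zero.mpr n.factorial_ne_zero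
  field_simp
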